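/- In R[X], for all m, n ∈ ℕ and every a ∈ R, the constant coefficient of the star product X^m ⋆_a X^n equals n! · a^n if m = n, and equals 0 if m ≠ n. -/
import Mathlib


open Polynomial

/-- The star product `f ⋆_a g = Σ_k (a^k/k!) f^{(k)} g^{(k)}` on `R[X]`. -/
noncomputable def ustar {R : Type*} [CommRing R] [Algebra ℚ R] (a : R)
    (f g : R[X]) : R[X] :=
  ∑ᶠ k : ℕ, (k.factorial : ℚ)⁻¹ •
    (a ^ k • ((⇑Polynomial.derivative)^[k] f * (⇑Polynomial.derivative)^[k] g))

/-- The operator `T_a f = Σ_m (a^m/(2^m m!)) f^{(2m)}` on `R[X]`. -/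
noncomputable def uT {R : Type*} [CommRing R] [Algebra ℚ R] (a : R)
    (f : R[X]) : R[X] :=
  ∑ᶠ m : ℕ, ((2 : ℚ) ^ m * m.factorial)⁻¹ •
    (a ^ m • (⇑Polynomial.derivative)^[2 * m] f)

/-- The constant coefficient of `X^m ⋆_a X^n` is `n!·a^n` if `m = n` and `0` otherwise. -/
theorem ustar_X_pow_coeff_zero {R : Type*} [CommRing R] [Algebra ℚ R] (a : R) (m n : ℕ) :
    (ustar a ((X : R[X]) ^ m) ((X : R[X]) ^ n)).coeff 0 =
      if m = n then (n.factorial : R) * a ^ n else 0 := by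
  have hsupp : (Function.support fun k : ℕ => (k.factorial : ℚ)⁻¹ •
      (a ^ k • ((⇑derivative)^[k] ((X : R[X]) ^ m) * (⇑derivative)^[k] ((X : R[X]) ^ n)))) ⊆
      ↑(Finset.range (m + 1)) := by
    intro k hk
    simp only [Function.mem_support] at hk
    by_contra h
    simp only [Finset.coe_range, Set.mem_Iio, not_lt] at h
    apply hk
    rw [Polynomial.iterate_derivative_eq_zero (p := (X : R[X]) ^ m)
      (by simpa using (Polynomial.natDegree_X_pow_le (R := R) m).trans_lt h)]
    simp
  rw [ustar, finsum_eq_finset_sum_of_support_subset _ hsupp, Polynomial.finset_sum_coeff]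
  rw [Finset.sum_eq_single m]
  · simp only [Polynomial.coeff_smul, Polynomial.mul_coeff_zero,
      iterate_derivative_X_pow_eq_smul, Nat.sub_self, Nat.descFactorial_self, pow_zero,
      Polynomial.coeff_smul, Polynomial.coeff_X_pow]
    rcases eq_or_ne m n with rfl | hmn
    · simp only [if_pos rfl]
      simp only [smul_eq_mul, mul_one, smul_smul]
      norm_num [Nat.sub_self]
      rw [Nat.descFactorial_self,
        show a ^ m * ((m.factorial : R) * (m.factorial : R)) =
          m.factorial • ((m.factorial : R) * a ^ m) from by rw [nsmul_eq_mul]; ring,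
        ← Nat.cast_smul_eq_nsmul ℚ, smul_smul,
        inv_mul_cancel₀ (by exact_mod_cast Nat.factorial_ne_zero m), one_smul]
    · rw [if_neg hmn]
      rcases lt_or_gt_of_ne hmn with hlt | hgt
      · have h1 : n - m ≠ 0 := by omega
        simp [h1]
        exact fun h => absurd h.symm h1
      · have h1 : n.descFactorial m = 0 := Nat.descFactorial_eq_zero_iff_lt.2 hgt
        simp [h1]
  · intro k hk hkm
    have hk' : k < m := by
      simp only [Finset.mem_range] at hk; omega
    have : m - k ≠ 0 := by omega
    simp [Polynomial.coeff_smul, Polynomial.mul_coeff_zero,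
      iterate_derivative_X_pow_eq_smul, Polynomial.coeff_X_pow]
    exact fun _ h => absurd h.symm this
  · intro h
    simp at h
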